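/- Let G be a 2-connected plane graph. The set B of boundaries of all bounded faces forms a basis of the cycle space of G in which every edge has charge at most 2, and every edge on the outer face has charge exactly 1. -/

import Mathlib

open scoped Classical

noncomputable section

/-- Helper: quotients of finite types are finite. -/
noncomputable def quotFintype {α : Type} [Fintype α] (r : α → α → Prop) : Fintype (Quot r) :=
  Fintype.ofSurjective (Quot.mk r) fun q => Quot.exists_rep q

/-- A finite multigraph.  Each edge `e` carries an (arbitrarily chosen) ordering of its two
endpoints, `fst e` and `snd e`; a loop is an edge with `fst e = snd e`. -/
structure Multigraph where
  V : Type
  E : Type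
  fintV : Fintype V
  fintE : Fintype E
  fst : E → V
  snd : E → V

attribute [instance] Multigraph.fintV Multigraph.fintE

namespace Multigraph

variable (G : Multigraph)

/-- Incidence of a vertex and an edge, modulo 2 (a loop is incident twice, i.e. 0 mod 2). -/
noncomputable def inc (v : G.V) (e : G.E) : ZMod 2 :=
  (if G.fst e = v then 1 else 0) + (if G.snd e = v then 1 else 0)

/-- The cycle space of `G` over `F_2`: characteristic vectors of edge sets in which every
vertex has even degree (i.e. Eulerian subgraphs), with addition = symmetric difference. -/
noncomputable def cycleSpace : Submodule (ZMod 2) (G.E → ZMod 2) where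
  carrier := {x | ∀ v : G.V, ∑ e : G.E, G.inc v e * x e = 0}
  zero_mem' := by intro v; simp
  add_mem' := by
    intro a b ha hb v
    have h : ∀ e : G.E, G.inc v e * (a + b) e = G.inc v e * a e + G.inc v e * b e := by
      intro e
      show G.inc v e * (a e + b e) = G.inc v e * a e + G.inc v e * b e
      ring
    rw [Finset.sum_congr rfl fun e _ => h e, Finset.sum_add_distrib, ha v, hb v, add_zero]
  smul_mem' := by
    intro c x hx v
    have h : ∀ e : G.E, G.inc v e * (c • x) e = c * (G.inc v e * x e) := by
      intro e
      show G.inc v e * (c * x e) = c * (G.inc v e * x e)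
      ring
    rw [Finset.sum_congr rfl fun e _ => h e, ← Finset.mul_sum, hx v, mul_zero]

/-- The charge of an edge `e` with respect to a collection `B` of (characteristic vectors of)
subgraphs: the number of members of `B` containing `e`. -/
noncomputable def charge (B : Finset (G.E → ZMod 2)) (e : G.E) : ℕ :=
  (B.filter fun x => x e ≠ 0).card

/-- `B` is a basis of the cycle space of `G`. -/
def IsCycleBasis (B : Finset (G.E → ZMod 2)) : Prop :=
  (∀ x ∈ B, x ∈ G.cycleSpace) ∧
    LinearIndependent (ZMod 2) (fun x : B => (x : G.E → ZMod 2)) ∧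
    Submodule.span (ZMod 2) (B : Set (G.E → ZMod 2)) = G.cycleSpace

/-- `B` is a `k`-basis: a basis of the cycle space in which every edge has charge at most `k`. -/
def IsKBasis (k : ℕ) (B : Finset (G.E → ZMod 2)) : Prop :=
  G.IsCycleBasis B ∧ ∀ e : G.E, G.charge B e ≤ k

/-- The basis number of `G`: the least `k` such that `G` has a `k`-basis. -/
noncomputable def basisNum : ℕ := sInf {k | ∃ B, G.IsKBasis k B}

/-- Adjacency of two vertices. -/
def Adj (a b : G.V) : Prop :=
  ∃ e : G.E, (G.fst e = a ∧ G.snd e = b) ∨ (G.fst e = b ∧ G.snd e = a)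

/-- Connectivity. -/
def Connected : Prop :=
  Nonempty G.V ∧ ∀ a b : G.V, Relation.ReflTransGen G.Adj a b

/-- Degree of a vertex (a loop counts twice). -/
noncomputable def degree (v : G.V) : ℕ :=
  ∑ e : G.E, ((if G.fst e = v then 1 else 0) + (if G.snd e = v then 1 else 0))

/-- The subgraph with the same vertex set and edge set restricted to `S`. -/
noncomputable def edgeRestrict (S : Set G.E) : Multigraph where
  V := G.V
  E := S
  fintV := G.fintV
  fintE := (Set.toFinite S).fintype
  fst := fun e => G.fst e.1
  snd := fun e => G.snd e.1

/-- Deletion of a vertex (and all edges incident with it). -/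
noncomputable def deleteVertex (v : G.V) : Multigraph where
  V := {u : G.V // u ≠ v}
  E := {e : G.E // G.fst e ≠ v ∧ G.snd e ≠ v}
  fintV := by classical exact inferInstance
  fintE := by classical exact inferInstance
  fst := fun e => ⟨G.fst e.1, e.2.1⟩
  snd := fun e => ⟨G.snd e.1, e.2.2⟩

/-- `G` is 2-connected: at least 3 vertices, connected, and no cutvertex. -/
def TwoConnected : Prop :=
  G.Connected ∧ 3 ≤ Nat.card G.V ∧ ∀ v : G.V, (G.deleteVertex v).Connected

/-- A cycle of length `n` in `G`: `n` distinct vertices and `n` distinct edges, with edge `i`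
joining vertex `i` to vertex `i+1` (cyclically). -/
def IsCycleOn (n : ℕ) (vs : Fin n → G.V) (es : Fin n → G.E) : Prop :=
  Function.Injective vs ∧ Function.Injective es ∧
    ∀ i : Fin n,
      (G.fst (es i) = vs i ∧ G.snd (es i) = vs (finRotate n i)) ∨
      (G.fst (es i) = vs (finRotate n i) ∧ G.snd (es i) = vs i)

/-- A path with `n` edges, given by its (distinct) vertices and its edges. -/
def IsPathOn (n : ℕ) (vs : Fin (n + 1) → G.V) (es : Fin n → G.E) : Prop :=
  Function.Injective vs ∧
    ∀ i : Fin n,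
      (G.fst (es i) = vs i.castSucc ∧ G.snd (es i) = vs i.succ) ∨
      (G.fst (es i) = vs i.succ ∧ G.snd (es i) = vs i.castSucc)

/-- `p` is the characteristic vector of (the edge set of) a path from `s` to `t`. -/
def IsPathVec (s t : G.V) (p : G.E → ZMod 2) : Prop :=
  ∃ (n : ℕ) (vs : Fin (n + 1) → G.V) (es : Fin n → G.E),
    G.IsPathOn n vs es ∧ vs 0 = s ∧ vs (Fin.last n) = t ∧
      ∀ f : G.E, p f ≠ 0 ↔ ∃ i, es i = f

/-- Two edges lie in a common block: they are equal, or they lie on a common cycle. -/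
def BlockRel (e f : G.E) : Prop :=
  e = f ∨ ∃ (n : ℕ) (vs : Fin n → G.V) (es : Fin n → G.E),
    1 ≤ n ∧ G.IsCycleOn n vs es ∧ (∃ i, es i = e) ∧ (∃ j, es j = f)

/-- `T` is a spanning tree of `G` (as an edge set): the spanning subgraph with edge set `T`
is connected and has no cycles. -/
def IsSpanningTree (T : Set G.E) : Prop :=
  (G.edgeRestrict T).Connected ∧
    ∀ (n : ℕ) (vs : Fin n → (G.edgeRestrict T).V) (es : Fin n → (G.edgeRestrict T).E),
      (G.edgeRestrict T).IsCycleOn n vs es → n = 0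

/-- Contraction of the edge `e`: identify its two endpoints and delete `e`. -/
noncomputable def contract (e : G.E) : Multigraph where
  V := Quot (fun a b : G.V => a = G.fst e ∧ b = G.snd e)
  E := {f : G.E // f ≠ e}
  fintV := quotFintype _
  fintE := by classical exact inferInstance
  fst := fun f => Quot.mk _ (G.fst f.1)
  snd := fun f => Quot.mk _ (G.snd f.1)

/-- Addition of a (possibly parallel) edge joining `u` and `v`. -/
noncomputable def addEdge (u v : G.V) : Multigraph where
  V := G.V
  E := Option G.E
  fintV := G.fintV
  fintE := inferInstance
  fst := fun o => o.elim u G.fst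
  snd := fun o => o.elim v G.snd

/-- Subdivision of the edge `e`: delete `e` and add a new vertex (`none`) joined to both
endpoints of `e`. -/
noncomputable def subdivide (e : G.E) : Multigraph where
  V := Option G.V
  E := {f : G.E // f ≠ e} ⊕ Bool
  fintV := inferInstance
  fintE := by classical exact inferInstance
  fst := Sum.elim (fun f => some (G.fst f.1))
    (fun b => cond b (some (G.fst e)) (some (G.snd e)))
  snd := Sum.elim (fun f => some (G.snd f.1)) (fun _ => none)

/-- Replacement of the edge `e` of `G` by the graph `H` with terminals `s`, `t`:
delete `e`, take the disjoint union with `H`, and identify the endpoints of `e`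
with the terminals. -/
noncomputable def replaceEdge (e : G.E) (H : Multigraph) (s t : H.V) : Multigraph where
  V := Quot (fun a b : G.V ⊕ H.V =>
        (a = Sum.inl (G.fst e) ∧ b = Sum.inr s) ∨ (a = Sum.inl (G.snd e) ∧ b = Sum.inr t))
  E := {f : G.E // f ≠ e} ⊕ H.E
  fintV := quotFintype _
  fintE := by classical exact inferInstance
  fst := Sum.elim (fun f => Quot.mk _ (Sum.inl (G.fst f.1)))
    (fun f => Quot.mk _ (Sum.inr (H.fst f)))
  snd := Sum.elim (fun f => Quot.mk _ (Sum.inl (G.snd f.1)))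
    (fun f => Quot.mk _ (Sum.inr (H.snd f)))

/-! ### Combinatorial embeddings (rotation systems) and planarity -/

/-- Darts: each edge gives two darts. -/
def Dart : Type := G.E × Bool

noncomputable instance : Fintype G.Dart := inferInstanceAs (Fintype (G.E × Bool))

/-- The vertex at which a dart is based. -/
def dartVertex (d : G.Dart) : G.V := cond d.2 (G.fst d.1) (G.snd d.1)

/-- The involution exchanging the two darts of each edge. -/
def dartFlip : Equiv.Perm G.Dart where
  toFun d := (d.1, !d.2)
  invFun d := (d.1, !d.2)
  left_inv := fun d => by cases d; simp <;> rfl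
  right_inv := fun d => by cases d; simp <;> rfl

/-- `σ` is a rotation system: its orbits are exactly the sets of darts based at a
common vertex. -/
def IsRotation (σ : Equiv.Perm G.Dart) : Prop :=
  ∀ d d' : G.Dart, σ.SameCycle d d' ↔ G.dartVertex d = G.dartVertex d'

/-- The face permutation of a rotation system. -/
def facePerm (σ : Equiv.Perm G.Dart) : Equiv.Perm G.Dart := G.dartFlip.trans σ

/-- The faces of the embedding given by `σ`: orbits of the face permutation. -/
def Faces (σ : Equiv.Perm G.Dart) : Type := Quot (G.facePerm σ).SameCycle

/-- The face containing a given dart. -/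
def faceOf (σ : Equiv.Perm G.Dart) (d : G.Dart) : G.Faces σ := Quot.mk _ d

noncomputable def numFaces (σ : Equiv.Perm G.Dart) : ℕ := Nat.card (G.Faces σ)

noncomputable def numComponents : ℕ := Nat.card (Quot G.Adj)

/-- The number of connected components containing at least one edge. -/
noncomputable def numEdgedComponents : ℕ :=
  Nat.card {c : Quot G.Adj // ∃ e : G.E, Quot.mk G.Adj (G.fst e) = c}

/-- `σ` is a planar (genus zero) embedding, by Euler's formula
(componentwise `V - E + F = 2`, where components without edges contribute one global face). -/
def IsPlanarRotation (σ : Equiv.Perm G.Dart) : Prop :=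
  G.IsRotation σ ∧
    G.numFaces σ + Nat.card G.V = Nat.card G.E + G.numComponents + G.numEdgedComponents

/-- `G` is planar: it admits a genus-zero combinatorial embedding. -/
def IsPlanar : Prop := ∃ σ : Equiv.Perm G.Dart, G.IsPlanarRotation σ

/-- The boundary of a face, as an element of `F_2^E`: the edges having exactly one of
their two darts on the face. -/
noncomputable def faceBoundary (σ : Equiv.Perm G.Dart) (c : G.Faces σ) : G.E → ZMod 2 :=
  fun e => ∑ b : Bool, if G.faceOf σ (e, b) = c then 1 else 0

/-- The vertex `v` lies on the face `c`. -/
def VertexOnFace (σ : Equiv.Perm G.Dart) (v : G.V) (c : G.Faces σ) : Prop :=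
  ∃ d : G.Dart, G.faceOf σ d = c ∧ G.dartVertex d = v

/-- The edge `e` lies on the face `c`. -/
def EdgeOnFace (σ : Equiv.Perm G.Dart) (e : G.E) (c : G.Faces σ) : Prop :=
  ∃ b : Bool, G.faceOf σ (e, b) = c

end Multigraph

/-! ### Auxiliary development -/

namespace Multigraph

variable (G : Multigraph)

lemma zmod2_eq_of_add_eq_zero {a b : ZMod 2} (h : a + b = 0) : a = b := by
  have h' : a = -b := eq_neg_of_add_eq_zero_left h
  rw [CharTwo.neg_eq] at h'
  exact h'

noncomputable instance facesFintype (σ : Equiv.Perm G.Dart) : Fintype (G.Faces σ) :=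
  quotFintype _

lemma dartFlip_apply (d : G.Dart) : G.dartFlip d = (d.1, !d.2) := rfl

lemma dartFlip_flip (d : G.Dart) : G.dartFlip (G.dartFlip d) = d := by
  rcases d with ⟨e, b⟩; cases b <;> rfl

lemma facePerm_apply (σ : Equiv.Perm G.Dart) (d : G.Dart) :
    G.facePerm σ d = σ (G.dartFlip d) := rfl

lemma faceOf_eq_of_sameCycle {σ : Equiv.Perm G.Dart} {d d' : G.Dart}
    (h : (G.facePerm σ).SameCycle d d') : G.faceOf σ d = G.faceOf σ d' :=
  Quot.sound h

lemma faceOf_facePerm (σ : Equiv.Perm G.Dart) (d : G.Dart) :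
    G.faceOf σ (G.facePerm σ d) = G.faceOf σ d :=
  (G.faceOf_eq_of_sameCycle ⟨1, by simp⟩).symm

lemma faceOf_flip (σ : Equiv.Perm G.Dart) (d : G.Dart) :
    G.faceOf σ (G.dartFlip d) = G.faceOf σ (σ d) := by
  have : G.facePerm σ (G.dartFlip d) = σ d := by
    rw [facePerm_apply, dartFlip_flip]
  rw [← this, faceOf_facePerm]

lemma dartVertex_sigma {σ : Equiv.Perm G.Dart} (hrot : G.IsRotation σ) (d : G.Dart) :
    G.dartVertex (σ d) = G.dartVertex d :=
  ((hrot (σ d) d).mp ⟨-1, by simp⟩)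

lemma dartVertex_sigma_inv {σ : Equiv.Perm G.Dart} (hrot : G.IsRotation σ) (d : G.Dart) :
    G.dartVertex (σ⁻¹ d) = G.dartVertex d :=
  ((hrot (σ⁻¹ d) d).mp ⟨1, by simp⟩)

lemma dartVertex_mk_true (e : G.E) : G.dartVertex (e, true) = G.fst e := rfl
lemma dartVertex_mk_false (e : G.E) : G.dartVertex (e, false) = G.snd e := rfl

/-- Every face boundary lies in the cycle space (only needs the rotation property). -/
lemma faceBoundary_mem_cycleSpace {σ : Equiv.Perm G.Dart} (hrot : G.IsRotation σ)
    (c : G.Faces σ) : G.faceBoundary σ c ∈ G.cycleSpace := by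
  intro v
  classical
  set f : G.Dart → ZMod 2 := fun d =>
    (if G.dartVertex d = v then 1 else 0) * (if G.faceOf σ d = c then 1 else 0) with hf
  set g : G.Dart → ZMod 2 := fun d =>
    (if G.dartVertex (G.dartFlip d) = v then 1 else 0) *
      (if G.faceOf σ d = c then 1 else 0) with hg
  have key : ∀ e : G.E, G.inc v e * G.faceBoundary σ c e
      = (f (e, true) + f (e, false)) + (g (e, true) + g (e, false)) := by
    intro e
    have h1 : G.dartVertex (G.dartFlip (e, true)) = G.snd e := rfl
    have h2 : G.dartVertex (G.dartFlip (e, false)) = G.fst e := rfl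
    simp only [hf, hg, inc, faceBoundary, Fintype.sum_bool, h1, h2,
      dartVertex_mk_true, dartVertex_mk_false]
    split_ifs <;> simp_all <;> decide
  calc ∑ e : G.E, G.inc v e * G.faceBoundary σ c e
      = ∑ e : G.E, ((f (e, true) + f (e, false)) + (g (e, true) + g (e, false))) :=
        Finset.sum_congr rfl fun e _ => key e
    _ = (∑ d : G.Dart, f d) + (∑ d : G.Dart, g d) := by
        have hsplit : ∀ F : G.Dart → ZMod 2,
            (∑ d : G.Dart, F d) = ∑ e : G.E, (F (e, true) + F (e, false)) := by
          intro F
          have h1 : (∑ d : G.Dart, F d) = ∑ p : G.E × Bool, F p :=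
            Fintype.sum_equiv (Equiv.cast rfl) _ _ (fun p => rfl)
          rw [h1]
          exact (Fintype.sum_prod_type (fun p : G.E × Bool => F p)).trans
            (Finset.sum_congr rfl fun e _ => by rw [Fintype.sum_bool, add_comm])
        rw [hsplit f, hsplit g]
        exact Finset.sum_add_distrib
    _ = (∑ d : G.Dart, f d) + (∑ d : G.Dart, f d) := by
        congr 1
        refine (Fintype.sum_equiv (σ⁻¹.trans G.dartFlip) _ _ ?_).symm
        intro d
        have hv : G.dartVertex (G.dartFlip (G.dartFlip (σ⁻¹ d))) = G.dartVertex d := by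
          rw [dartFlip_flip]; exact G.dartVertex_sigma_inv hrot d
        have hfc : G.faceOf σ (G.dartFlip (σ⁻¹ d)) = G.faceOf σ d := by
          rw [faceOf_flip]; simp
        simp only [hg, hf, Equiv.trans_apply, hv, hfc]
    _ = 0 := CharTwo.add_self_eq_zero _

/-- A function on darts invariant under the face permutation and the flip is constant,
provided the rotation system is genuine and the graph is connected. -/
lemma dart_function_constant {σ : Equiv.Perm G.Dart} (hrot : G.IsRotation σ)
    (hconn : G.Connected) {M : Type} (h : G.Dart → M)
    (hflip : ∀ d, h (G.dartFlip d) = h d)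
    (hperm : ∀ d, h (G.facePerm σ d) = h d) :
    ∀ d d' : G.Dart, h d = h d' := by
  have hs : ∀ d, h (σ d) = h d := by
    intro d
    have : G.facePerm σ (G.dartFlip d) = σ d := by rw [facePerm_apply, dartFlip_flip]
    calc h (σ d) = h (G.facePerm σ (G.dartFlip d)) := by rw [this]
      _ = h (G.dartFlip d) := hperm _
      _ = h d := hflip _
  have hsinv : ∀ d, h (σ⁻¹ d) = h d := by
    intro d
    conv_rhs => rw [← Equiv.apply_symm_apply σ d]
    exact (hs (σ.symm d)).symm
  have hzpow : ∀ (n : ℤ) (d : G.Dart), h ((σ ^ n) d) = h d := by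
    intro n
    induction n using Int.induction_on with
    | zero => intro d; simp
    | succ k ih =>
        intro d
        have : (σ ^ ((k : ℤ) + 1)) d = (σ ^ (k : ℤ)) (σ d) := by
          rw [zpow_add_one, Equiv.Perm.mul_apply]
        rw [this, ih, hs]
    | pred k ih =>
        intro d
        have : (σ ^ (-(k : ℤ) - 1)) d = (σ ^ (-(k : ℤ))) (σ⁻¹ d) := by
          rw [zpow_sub_one, Equiv.Perm.mul_apply]
        rw [this, ih, hsinv]
  have hsame : ∀ d d' : G.Dart, σ.SameCycle d d' → h d = h d' := by
    rintro d d' ⟨n, rfl⟩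
    exact (hzpow n d).symm
  have hvert : ∀ d d' : G.Dart, G.dartVertex d = G.dartVertex d' → h d = h d' :=
    fun d d' hv => hsame d d' ((hrot d d').mpr hv)
  have key : ∀ a b : G.V, Relation.ReflTransGen G.Adj a b →
      ∀ d d' : G.Dart, G.dartVertex d = a → G.dartVertex d' = b → h d = h d' := by
    intro a b hab
    induction hab with
    | refl => intro d d' h1 h2; exact hvert d d' (h1.trans h2.symm)
    | @tail b c hab hbc ih =>
        intro d d' h1 h2
        obtain ⟨e, he⟩ := hbc
        rcases he with ⟨hfe, hse⟩ | ⟨hfe, hse⟩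
        · calc h d = h (e, true) := ih d (e, true) h1 (by rw [dartVertex_mk_true, hfe])
            _ = h (e, false) := by
                have : G.dartFlip (e, true) = (e, false) := rfl
                rw [← this]; exact (hflip _).symm
            _ = h d' := hvert _ _ (by rw [dartVertex_mk_false, hse, h2])
        · calc h d = h (e, false) := ih d (e, false) h1 (by rw [dartVertex_mk_false, hse])
            _ = h (e, true) := by
                have : G.dartFlip (e, false) = (e, true) := rfl
                rw [← this]; exact (hflip _).symm
            _ = h d' := hvert _ _ (by rw [dartVertex_mk_true, hfe, h2])
  intro d d'
  exact key _ _ (hconn.2 _ _) d d' rfl rfl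

/-! ### The incidence map and the dimension of the cycle space -/

/-- The boundary (incidence) map `F₂^E → F₂^V`. -/
noncomputable def incMap : (G.E → ZMod 2) →ₗ[ZMod 2] (G.V → ZMod 2) where
  toFun x := fun v => ∑ e : G.E, G.inc v e * x e
  map_add' a b := by
    funext v
    simp [mul_add, Finset.sum_add_distrib]
  map_smul' c x := by
    funext v
    simp only [RingHom.id_apply, Pi.smul_apply, smul_eq_mul, Finset.mul_sum]
    exact Finset.sum_congr rfl fun e _ => by ring

lemma cycleSpace_eq_ker : G.cycleSpace = LinearMap.ker G.incMap := by
  ext x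
  constructor
  · intro hx
    simp only [LinearMap.mem_ker]
    funext v
    exact hx v
  · intro hx v
    have := congrFun (LinearMap.mem_ker.mp hx) v
    exact this

/-- The sum-of-coordinates functional on `F₂^V`. -/
noncomputable def sumFun : (G.V → ZMod 2) →ₗ[ZMod 2] ZMod 2 where
  toFun y := ∑ v : G.V, y v
  map_add' a b := by simp [Finset.sum_add_distrib]
  map_smul' c x := by simp [Finset.mul_sum]

/-- Characteristic vector of a pair of vertices. -/
noncomputable def vpair (a b : G.V) : G.V → ZMod 2 :=
  fun v => (if a = v then 1 else 0) + (if b = v then 1 else 0)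

lemma vpair_self (a : G.V) : G.vpair a a = 0 := by
  funext v; exact CharTwo.add_self_eq_zero _

lemma vpair_comm (a b : G.V) : G.vpair a b = G.vpair b a := by
  funext v; exact add_comm _ _

lemma vpair_trans (a b c : G.V) : G.vpair a b + G.vpair b c = G.vpair a c := by
  funext v
  show ((if a = v then (1:ZMod 2) else 0) + (if b = v then 1 else 0)) +
      ((if b = v then (1:ZMod 2) else 0) + (if c = v then 1 else 0)) = _
  have : ∀ x y z : ZMod 2, (x + y) + (y + z) = x + z + (y + y) := by intros; ring
  rw [this, CharTwo.add_self_eq_zero, add_zero]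
  rfl

lemma incMap_single (e : G.E) :
    G.incMap (fun f => if f = e then 1 else 0) = G.vpair (G.fst e) (G.snd e) := by
  funext v
  show (∑ f : G.E, G.inc v f * if f = e then 1 else 0) = _
  simp only [mul_ite, mul_one, mul_zero]
  rw [Finset.sum_ite_eq' Finset.univ e (fun f => G.inc v f)]
  simp [inc, vpair]

lemma vpair_mem_range (a b : G.V) (hab : Relation.ReflTransGen G.Adj a b) :
    G.vpair a b ∈ LinearMap.range G.incMap := by
  induction hab with
  | refl => rw [vpair_self]; exact Submodule.zero_mem _
  | @tail b c hab hbc ih =>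
      rw [← G.vpair_trans a b c]
      refine Submodule.add_mem _ ih ?_
      obtain ⟨e, he⟩ := hbc
      rcases he with ⟨h1, h2⟩ | ⟨h1, h2⟩
      · exact ⟨_, by rw [incMap_single, h1, h2]⟩
      · exact ⟨_, by rw [incMap_single, h1, h2, vpair_comm]⟩

lemma sum_inc (e : G.E) : ∑ v : G.V, G.inc v e = 0 := by
  simp only [inc, Finset.sum_add_distrib, Finset.sum_ite_eq, Finset.mem_univ, if_true]
  exact CharTwo.add_self_eq_zero _

lemma range_incMap (hconn : G.Connected) :
    LinearMap.range G.incMap = LinearMap.ker G.sumFun := by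
  apply le_antisymm
  · rintro y ⟨x, rfl⟩
    simp only [LinearMap.mem_ker]
    show ∑ v : G.V, ∑ e : G.E, G.inc v e * x e = 0
    rw [Finset.sum_comm]
    have : ∀ e : G.E, ∑ v : G.V, G.inc v e * x e = 0 := by
      intro e
      rw [← Finset.sum_mul, G.sum_inc, zero_mul]
    simp [this]
  · intro y hy
    obtain ⟨v₀⟩ := hconn.1
    have hy' : ∑ v : G.V, y v = 0 := hy
    have hrepr : y = ∑ a : G.V, y a • G.vpair a v₀ := by
      funext w
      rw [Finset.sum_apply]
      simp only [Pi.smul_apply, smul_eq_mul, vpair, mul_add]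
      rw [Finset.sum_add_distrib, ← Finset.sum_mul, hy', zero_mul, add_zero]
      simp only [mul_ite, mul_one, mul_zero]
      rw [Finset.sum_ite_eq' Finset.univ w (fun a => y a)]
      simp
    rw [hrepr]
    exact Submodule.sum_mem _ fun a _ =>
      Submodule.smul_mem _ _ (G.vpair_mem_range a v₀ (hconn.2 a v₀))

lemma finrank_cycleSpace (hconn : G.Connected) :
    Module.finrank (ZMod 2) G.cycleSpace + Fintype.card G.V
      = Fintype.card G.E + 1 := by
  obtain ⟨v₀⟩ := hconn.1
  have h1 : Module.finrank (ZMod 2) (LinearMap.range G.incMap)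
      + Module.finrank (ZMod 2) (LinearMap.ker G.incMap)
      = Fintype.card G.E := by
    rw [LinearMap.finrank_range_add_finrank_ker]
    simp [Module.finrank_pi]
  have hsurj : Function.Surjective G.sumFun := by
    intro z
    refine ⟨fun v => if v = v₀ then z else 0, ?_⟩
    show (∑ v : G.V, if v = v₀ then z else 0) = z
    rw [Finset.sum_ite_eq' Finset.univ v₀ (fun _ => z)]
    simp
  have h2 : Module.finrank (ZMod 2) (LinearMap.range G.sumFun)
      + Module.finrank (ZMod 2) (LinearMap.ker G.sumFun)
      = Fintype.card G.V := by
    rw [LinearMap.finrank_range_add_finrank_ker]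
    simp [Module.finrank_pi]
  have h3 : LinearMap.range G.sumFun = ⊤ := LinearMap.range_eq_top.mpr hsurj
  rw [h3] at h2
  rw [finrank_top] at h2
  rw [Module.finrank_self] at h2
  rw [G.range_incMap hconn] at h1
  rw [G.cycleSpace_eq_ker]
  omega

/-! ### Counting components и faces -/

lemma quot_mk_eq_of_reflTransGen {a b : G.V} (h : Relation.ReflTransGen G.Adj a b) :
    Quot.mk G.Adj a = Quot.mk G.Adj b := by
  induction h with
  | refl => rfl
  | tail _ hbc ih => exact ih.trans (Quot.sound hbc)

lemma exists_edge (h2 : G.TwoConnected) : Nonempty G.E := by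
  have h3 : 3 ≤ Nat.card G.V := h2.2.1
  rw [Nat.card_eq_fintype_card] at h3
  obtain ⟨a, b, hab⟩ := Fintype.exists_pair_of_one_lt_card (α := G.V) (by omega)
  rcases (h2.1.2 a b).cases_head with heq | ⟨c, hac, _⟩
  · exact absurd heq hab
  · obtain ⟨f, _⟩ := hac
    exact ⟨f⟩

lemma numComponents_eq_one (hconn : G.Connected) : G.numComponents = 1 := by
  have hne : Nonempty (Quot G.Adj) := ⟨Quot.mk _ hconn.1.some⟩
  have hsub : Subsingleton (Quot G.Adj) := by
    constructor
    intro x y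
    induction x using Quot.ind with | _ a =>
    induction y using Quot.ind with | _ b =>
    exact G.quot_mk_eq_of_reflTransGen (hconn.2 a b)
  exact Nat.card_eq_one_iff_unique.mpr ⟨hsub, hne⟩

lemma numEdgedComponents_eq_one (hconn : G.Connected) (he : Nonempty G.E) :
    G.numEdgedComponents = 1 := by
  have hsub0 : Subsingleton (Quot G.Adj) := by
    constructor
    intro x y
    induction x using Quot.ind with | _ a =>
    induction y using Quot.ind with | _ b =>
    exact G.quot_mk_eq_of_reflTransGen (hconn.2 a b)
  have hsub : Subsingleton {c : Quot G.Adj // ∃ e : G.E, Quot.mk G.Adj (G.fst e) = c} :=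
    ⟨fun a b => Subtype.ext (Subsingleton.elim _ _)⟩
  obtain ⟨e⟩ := he
  have hne : Nonempty {c : Quot G.Adj // ∃ e : G.E, Quot.mk G.Adj (G.fst e) = c} :=
    ⟨⟨Quot.mk G.Adj (G.fst e), e, rfl⟩⟩
  exact Nat.card_eq_one_iff_unique.mpr ⟨hsub, hne⟩

/-! ### A cycle through every edge of a 2-connected graph -/

/-- Adjacency avoiding the edge `e`. -/
def Adj' (e : G.E) (a b : G.V) : Prop :=
  ∃ f : G.E, f ≠ e ∧ ((G.fst f = a ∧ G.snd f = b) ∨ (G.fst f = b ∧ G.snd f = a))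

lemma adj'_symm (e : G.E) : Symmetric (G.Adj' e) := by
  rintro a b ⟨f, hf, h⟩
  exact ⟨f, hf, h.symm⟩

lemma delete_path_lift {e : G.E} {z : G.V} (hz : G.fst e = z ∨ G.snd e = z)
    {a b : (G.deleteVertex z).V}
    (hp : Relation.ReflTransGen (G.deleteVertex z).Adj a b) :
    Relation.ReflTransGen (G.Adj' e) a.1 b.1 := by
  induction hp with
  | refl => exact Relation.ReflTransGen.refl
  | @tail b c hab hbc ih =>
      refine ih.tail ?_
      obtain ⟨f, hf⟩ := hbc
      have hfe : f.1 ≠ e := by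
        intro heq
        rcases hz with hz | hz
        · exact f.2.1 (by rw [heq, hz])
        · exact f.2.2 (by rw [heq, hz])
      rcases hf with ⟨h1, h2⟩ | ⟨h1, h2⟩
      · exact ⟨f.1, hfe, Or.inl ⟨congrArg Subtype.val h1, congrArg Subtype.val h2⟩⟩
      · exact ⟨f.1, hfe, Or.inr ⟨congrArg Subtype.val h1, congrArg Subtype.val h2⟩⟩

/-- In a 2-connected graph no edge is a bridge: the endpoints of `e` are joined
avoiding `e`. -/
lemma no_bridge (h2 : G.TwoConnected) (e : G.E) :
    Relation.ReflTransGen (G.Adj' e) (G.fst e) (G.snd e) := by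
  classical
  set u := G.fst e with hu
  set v := G.snd e with hv
  by_cases huv : u = v
  · rw [huv]
  by_contra hcon
  -- find a third vertex
  have h3 : 3 ≤ Fintype.card G.V := by
    have := h2.2.1; rwa [Nat.card_eq_fintype_card] at this
  have hw : ∃ w : G.V, w ≠ u ∧ w ≠ v := by
    have hvu : v ∈ Finset.univ.erase u := Finset.mem_erase.mpr ⟨fun h => huv h.symm, Finset.mem_univ _⟩
    have hcard : 0 < ((Finset.univ.erase u).erase v).card := by
      rw [Finset.card_erase_of_mem hvu, Finset.card_erase_of_mem (Finset.mem_univ u)]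
      have : Finset.univ.card = Fintype.card G.V := rfl
      omega
    obtain ⟨w, hwmem⟩ := Finset.card_pos.mp hcard
    obtain ⟨hwv, hwu'⟩ := Finset.mem_erase.mp hwmem
    obtain ⟨hwu, _⟩ := Finset.mem_erase.mp hwu'
    exact ⟨w, hwu, hwv⟩
  obtain ⟨w, hwu, hwv⟩ := hw
  haveI : Std.Symm (G.Adj' e) := ⟨fun _ _ h => G.adj'_symm e h⟩
  have hsymm : ∀ {a b : G.V}, Relation.ReflTransGen (G.Adj' e) a b →
      Relation.ReflTransGen (G.Adj' e) b a := fun h => Std.Symm.symm _ _ h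
  by_cases hPw : Relation.ReflTransGen (G.Adj' e) u w
  · -- use connectivity of G - u
    have hconn := (h2.2.2 u).2 ⟨v, fun h => huv h.symm⟩ ⟨w, hwu⟩
    have := G.delete_path_lift (Or.inl hu.symm) hconn
    exact hcon (hPw.trans (hsymm this))
  · -- use connectivity of G - v
    have hconn := (h2.2.2 v).2 ⟨u, huv⟩ ⟨w, hwv⟩
    have := G.delete_path_lift (Or.inr hv.symm) hconn
    exact hPw this

/-- In a 2-connected graph every edge lies on an element of the cycle space. -/
lemma exists_cycle_through (h2 : G.TwoConnected) (e : G.E) :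
    ∃ x ∈ G.cycleSpace, x e ≠ 0 := by
  classical
  have key : ∀ a b : G.V, Relation.ReflTransGen (G.Adj' e) a b →
      ∃ x : G.E → ZMod 2, x e = 0 ∧
        ∀ v : G.V, ∑ f : G.E, G.inc v f * x f = G.vpair a b v := by
    intro a b hab
    induction hab with
    | refl =>
        refine ⟨0, rfl, fun v => ?_⟩
        simp [vpair_self]
    | @tail b c hab hbc ih =>
        obtain ⟨x, hxe, hx⟩ := ih
        obtain ⟨f, hfe, hf⟩ := hbc
        refine ⟨x + (fun g => if g = f then (1:ZMod 2) else 0),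
          by simp [hxe, Ne.symm hfe], fun v => ?_⟩
        have hsum : ∑ g : G.E, G.inc v g * (x + (fun g => if g = f then (1:ZMod 2) else 0)) g
            = (∑ g : G.E, G.inc v g * x g) +
              ∑ g : G.E, G.inc v g * (if g = f then (1:ZMod 2) else 0) := by
          rw [← Finset.sum_add_distrib]
          exact Finset.sum_congr rfl fun g _ => by simp [mul_add]
        rw [hsum, hx]
        have h2' : ∑ g : G.E, G.inc v g * (if g = f then (1:ZMod 2) else 0)
            = G.vpair (G.fst f) (G.snd f) v := congrFun (G.incMap_single f) v
        rw [h2']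
        have : G.vpair (G.fst f) (G.snd f) v = G.vpair b c v := by
          rcases hf with ⟨h1', h2''⟩ | ⟨h1', h2''⟩
          · rw [h1', h2'']
          · rw [h1', h2'', vpair_comm]
        rw [this]
        exact congrFun (G.vpair_trans a b c) v
  obtain ⟨x, hxe, hx⟩ := key _ _ (G.no_bridge h2 e)
  refine ⟨x + (fun g => if g = e then (1:ZMod 2) else 0), ?_, by simp [hxe]⟩
  intro v
  have hsum : ∑ g : G.E, G.inc v g * (x + (fun g => if g = e then (1:ZMod 2) else 0)) g
      = (∑ g : G.E, G.inc v g * x g) +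
        ∑ g : G.E, G.inc v g * (if g = e then (1:ZMod 2) else 0) := by
    rw [← Finset.sum_add_distrib]
    exact Finset.sum_congr rfl fun g _ => by simp [mul_add]
  have h2' : ∑ g : G.E, G.inc v g * (if g = e then (1:ZMod 2) else 0)
      = G.vpair (G.fst e) (G.snd e) v := congrFun (G.incMap_single e) v
  rw [hsum, hx, h2']
  exact CharTwo.add_self_eq_zero _

/-- If a face boundary is nonzero on an edge, the face is one of the two faces of the edge. -/
lemma face_of_boundary_ne_zero {σ : Equiv.Perm G.Dart} {c : G.Faces σ} {e : G.E}
    (h : G.faceBoundary σ c e ≠ 0) :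
    G.faceOf σ (e, true) = c ∨ G.faceOf σ (e, false) = c := by
  by_contra hcon
  push_neg at hcon
  refine h ?_
  show (∑ b : Bool, if G.faceOf σ (e, b) = c then (1:ZMod 2) else 0) = 0
  rw [Fintype.sum_bool, if_neg hcon.1, if_neg hcon.2, add_zero]

/-- The bounded face boundaries are linearly independent. -/
lemma faceBoundary_linearIndependent {σ : Equiv.Perm G.Dart} (hrot : G.IsRotation σ)
    (hconn : G.Connected) (o : G.Faces σ) :
    LinearIndependent (ZMod 2)
      (fun c : {c : G.Faces σ // c ≠ o} => G.faceBoundary σ c.1) := by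
  classical
  rw [Fintype.linearIndependent_iff]
  intro gc hg c₀
  set Gc : G.Faces σ → ZMod 2 := fun c => if h : c = o then 0 else gc ⟨c, h⟩ with hGc
  have sub1 : ∀ f : G.Faces σ,
      (∑ c : {c : G.Faces σ // c ≠ o}, gc c * (if f = c.1 then (1:ZMod 2) else 0)) = Gc f := by
    intro f
    by_cases hf : f = o
    · subst hf
      rw [Finset.sum_eq_zero, hGc]
      · simp
      · intro c _
        rw [if_neg (fun h => c.2 h.symm), mul_zero]
    · rw [Finset.sum_eq_single (⟨f, hf⟩ : {c : G.Faces σ // c ≠ o})]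
      · rw [if_pos rfl, mul_one, hGc]
        simp [hf]
      · intro c _ hc
        rw [if_neg (fun h => hc (Subtype.ext h.symm)), mul_zero]
      · intro h
        exact absurd (Finset.mem_univ _) h
  have step2 : ∀ e : G.E,
      Gc (G.faceOf σ (e, true)) + Gc (G.faceOf σ (e, false)) = 0 := by
    intro e
    have h0 : (∑ c : {c : G.Faces σ // c ≠ o}, gc c * G.faceBoundary σ c.1 e) = 0 := by
      have := congrFun hg e
      rw [Finset.sum_apply] at this
      simpa [smul_eq_mul] using this
    have hbd : ∀ c : {c : G.Faces σ // c ≠ o}, G.faceBoundary σ c.1 e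
        = (if G.faceOf σ (e, true) = c.1 then (1:ZMod 2) else 0)
          + (if G.faceOf σ (e, false) = c.1 then (1:ZMod 2) else 0) := by
      intro c
      show (∑ b : Bool, if G.faceOf σ (e, b) = c.1 then (1:ZMod 2) else 0) = _
      rw [Fintype.sum_bool]
    calc Gc (G.faceOf σ (e, true)) + Gc (G.faceOf σ (e, false))
        = ∑ c : {c : G.Faces σ // c ≠ o}, gc c * G.faceBoundary σ c.1 e := by
          rw [← sub1, ← sub1, ← Finset.sum_add_distrib]
          exact (Finset.sum_congr rfl fun c _ => by rw [hbd c, mul_add]).symm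
      _ = 0 := h0
  have hflip : ∀ d : G.Dart, Gc (G.faceOf σ (G.dartFlip d)) = Gc (G.faceOf σ d) := by
    rintro ⟨e, b⟩
    cases b
    · have hx : G.dartFlip (e, false) = (e, true) := rfl
      rw [hx]
      exact zmod2_eq_of_add_eq_zero (step2 e)
    · have hx : G.dartFlip (e, true) = (e, false) := rfl
      rw [hx]
      exact (zmod2_eq_of_add_eq_zero (step2 e)).symm
  have hperm : ∀ d : G.Dart, Gc (G.faceOf σ (G.facePerm σ d)) = Gc (G.faceOf σ d) := by
    intro d
    rw [faceOf_facePerm]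
  have hconst := G.dart_function_constant hrot hconn (fun d => Gc (G.faceOf σ d)) hflip hperm
  obtain ⟨d₀, hd₀⟩ := Quot.exists_rep c₀.1
  obtain ⟨d₁, hd₁⟩ := Quot.exists_rep o
  have : Gc c₀.1 = Gc o := by
    rw [← hd₀, ← hd₁]
    exact hconst d₀ d₁
  have hzero : Gc c₀.1 = 0 := by
    rw [this, hGc]
    simp
  rw [hGc] at hzero
  simpa [c₀.2] using hzero

/-- The bounded face boundaries span the cycle space. -/
lemma span_faceBoundary_eq {σ : Equiv.Perm G.Dart} (h2 : G.TwoConnected)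
    (hσ : G.IsPlanarRotation σ) (o : G.Faces σ) :
    Submodule.span (ZMod 2)
      (Set.range fun c : {c : G.Faces σ // c ≠ o} => G.faceBoundary σ c.1)
      = G.cycleSpace := by
  classical
  have hconn := h2.1
  have hrot := hσ.1
  have hle : Submodule.span (ZMod 2)
      (Set.range fun c : {c : G.Faces σ // c ≠ o} => G.faceBoundary σ c.1)
      ≤ G.cycleSpace := by
    apply Submodule.span_le.mpr
    rintro _ ⟨c, rfl⟩
    exact G.faceBoundary_mem_cycleSpace hrot c.1
  have hli := G.faceBoundary_linearIndependent hrot hconn o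
  have hrank := finrank_span_eq_card hli
  have he := G.exists_edge h2
  have heuler := hσ.2
  rw [G.numComponents_eq_one hconn, G.numEdgedComponents_eq_one hconn he] at heuler
  have hfaces : G.numFaces σ = Fintype.card (G.Faces σ) := Nat.card_eq_fintype_card
  have hV : Nat.card G.V = Fintype.card G.V := Nat.card_eq_fintype_card
  have hE : Nat.card G.E = Fintype.card G.E := Nat.card_eq_fintype_card
  rw [hfaces, hV, hE] at heuler
  have hsub : Fintype.card {c : G.Faces σ // c ≠ o} + 1 = Fintype.card (G.Faces σ) := by
    have h1 : Fintype.card {c : G.Faces σ // ¬ c = o}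
        = Fintype.card (G.Faces σ) - Fintype.card {c : G.Faces σ // c = o} :=
      Fintype.card_subtype_compl _
    have h2' : Fintype.card {c : G.Faces σ // c = o} = 1 := Fintype.card_subtype_eq o
    have h3 : 0 < Fintype.card (G.Faces σ) :=
      Fintype.card_pos_iff.mpr ⟨o⟩
    rw [h2'] at h1
    have : Fintype.card {c : G.Faces σ // c ≠ o} = Fintype.card {c : G.Faces σ // ¬ c = o} := rfl
    omega
  have hdim := G.finrank_cycleSpace hconn
  refine Submodule.eq_of_le_of_finrank_le hle ?_
  rw [hrank]
  omega

end Multigraph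

/-- Let `G` be a 2-connected plane graph (a 2-connected graph with a planar
combinatorial embedding `σ`, with outer face `o`).  The boundaries of the bounded faces
(faces `≠ o`) form a basis of the cycle space of `G` in which every edge has charge at most 2,
and every edge on the outer face has charge exactly 1. -/
theorem boundedFaces_basis (G : Multigraph) (h2 : G.TwoConnected)
    (σ : Equiv.Perm G.Dart) (hσ : G.IsPlanarRotation σ) (o : G.Faces σ) :
    (∀ c : {c : G.Faces σ // c ≠ o}, G.faceBoundary σ c.1 ∈ G.cycleSpace) ∧
    LinearIndependent (ZMod 2)
      (fun c : {c : G.Faces σ // c ≠ o} => G.faceBoundary σ c.1) ∧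
    Submodule.span (ZMod 2)
      (Set.range fun c : {c : G.Faces σ // c ≠ o} => G.faceBoundary σ c.1) = G.cycleSpace ∧
    (∀ e : G.E,
      Nat.card {c : {c : G.Faces σ // c ≠ o} // G.faceBoundary σ c.1 e ≠ 0} ≤ 2) ∧
    (∀ e : G.E, G.EdgeOnFace σ e o →
      Nat.card {c : {c : G.Faces σ // c ≠ o} // G.faceBoundary σ c.1 e ≠ 0} = 1) := by
  classical
  have hrot := hσ.1
  have hconn := h2.1
  have hspan := G.span_faceBoundary_eq h2 hσ o
  refine ⟨fun c => G.faceBoundary_mem_cycleSpace hrot c.1,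
    G.faceBoundary_linearIndependent hrot hconn o, hspan, ?_, ?_⟩
  · intro e
    have hinj : Function.Injective
        (fun c : {c : {c : G.Faces σ // c ≠ o} // G.faceBoundary σ c.1 e ≠ 0} =>
          if G.faceOf σ (e, true) = c.1.1 then true else false) := by
      intro c c' hcc
      dsimp only at hcc
      have hd := G.face_of_boundary_ne_zero c.2
      have hd' := G.face_of_boundary_ne_zero c'.2
      have : c.1.1 = c'.1.1 := by
        by_cases h1 : G.faceOf σ (e, true) = c.1.1 <;>
          by_cases h2' : G.faceOf σ (e, true) = c'.1.1
        · exact h1.symm.trans h2'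
        · rw [if_pos h1, if_neg h2'] at hcc
          exact absurd hcc (by simp)
        · rw [if_neg h1, if_pos h2'] at hcc
          exact absurd hcc.symm (by simp)
        · rcases hd with h | h
          · exact absurd h h1
          · rcases hd' with h' | h'
            · exact absurd h' h2'
            · exact h.symm.trans h'
      exact Subtype.ext (Subtype.ext this)
    calc Nat.card {c : {c : G.Faces σ // c ≠ o} // G.faceBoundary σ c.1 e ≠ 0}
        ≤ Nat.card Bool := Nat.card_le_card_of_injective _ hinj
      _ = 2 := by simp [Nat.card_eq_fintype_card]
  · rintro e ⟨b₀, hb₀⟩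
    obtain ⟨x, hxcyc, hxe⟩ := G.exists_cycle_through h2 e
    have hex : ∃ c : {c : G.Faces σ // c ≠ o}, G.faceBoundary σ c.1 e ≠ 0 := by
      by_contra hall
      push_neg at hall
      have hker : G.cycleSpace ≤ LinearMap.ker
          (LinearMap.proj e : (G.E → ZMod 2) →ₗ[ZMod 2] ZMod 2) := by
        rw [← hspan]
        apply Submodule.span_le.mpr
        rintro _ ⟨c, rfl⟩
        simpa [LinearMap.mem_ker] using hall c
      have := hker hxcyc
      rw [LinearMap.mem_ker] at this
      exact hxe this
    have huniq : ∀ c : {c : G.Faces σ // c ≠ o}, G.faceBoundary σ c.1 e ≠ 0 →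
        c.1 = G.faceOf σ (e, !b₀) := by
      intro c hc
      have hd := G.face_of_boundary_ne_zero hc
      cases b₀
      · rcases hd with h | h
        · exact h.symm
        · exact absurd (h.symm.trans hb₀) c.2
      · rcases hd with h | h
        · exact absurd (h.symm.trans hb₀) c.2
        · exact h.symm
    rw [Nat.card_eq_one_iff_unique]
    constructor
    · constructor
      intro c c'
      have h1 := huniq c.1 c.2
      have h2' := huniq c'.1 c'.2
      exact Subtype.ext (Subtype.ext (h1.trans h2'.symm))
    · obtain ⟨c, hc⟩ := hex
      exact ⟨⟨c, hc⟩⟩
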